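/- arXiv:2204.09356 — 2 statements merged into one kernel-verified Lean document; each statement's English description precedes it below -/
import Mathlib

section
/- Let n ≥ 2 and suppose h1, h_{12},...,h_{1n} are quadratic forms in ℂ[X1,...,Xn] with 0 = h1·X1^4 + Σ_{j=2}^n h_{1j}·(X1+Xj)^4. Then h1 = 0 and h_{1j} = 0 for all j. -/
open MvPolynomial

/-- In `n + 2 ≥ 2` variables (paper's `X₁` is `X 0`): if quadratic forms `h₁`
and `h j` (for `j ≠ 0`, i.e. `j ∈ {2,…,n}` in the paper's numbering) satisfy
`0 = h₁·X₁⁴ + Σ_j h j·(X₁+Xⱼ)⁴`, then `h₁ = 0` and all `h j = 0`. -/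
theorem stmt_10 (n : ℕ) (h₁ : MvPolynomial (Fin (n + 2)) ℂ)
    (h : Fin (n + 2) → MvPolynomial (Fin (n + 2)) ℂ)
    (hh₁ : h₁.IsHomogeneous 2) (hh : ∀ j, (h j).IsHomogeneous 2)
    (heq : 0 = h₁ * X 0 ^ 4 +
      ∑ j ∈ Finset.univ.filter (fun j : Fin (n + 2) => j ≠ 0),
        h j * (X 0 + X j) ^ 4) :
    h₁ = 0 ∧ ∀ j : Fin (n + 2), j ≠ 0 → h j = 0 := by
  have hj0 : ∀ j : Fin (n + 2), j ≠ 0 → h j = 0 := by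
    intro j hj
    apply MvPolynomial.funext
    intro x
    rw [map_zero]
    set f : Fin (n + 2) → Polynomial ℂ :=
      fun k => if k = j then Polynomial.X else Polynomial.C (x k) with hfdef
    have hfdeg : ∀ k, (f k).natDegree ≤ 1 := by
      intro k
      simp only [hfdef]
      split <;> simp [Polynomial.natDegree_X_le]
    have hdeg : ∀ p : MvPolynomial (Fin (n + 2)) ℂ, p.IsHomogeneous 2 →
        (aeval f p).natDegree ≤ 2 := by
      intro p hp
      simpa using aeval_natDegree_le p hp.totalDegree_le f hfdeg
    have hf0 : f 0 = Polynomial.C (x 0) := by simp [hfdef, Ne.symm hj]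
    have hfj : f j = Polynomial.X := by simp [hfdef]
    -- apply aeval f to the equation
    have heq2 := congrArg (aeval f) heq
    simp only [map_zero, map_add, map_mul, map_sum, map_pow, aeval_X] at heq2
    rw [Finset.sum_eq_add_sum_sdiff_singleton_of_mem
      (show j ∈ Finset.univ.filter (fun k : Fin (n + 2) => k ≠ 0) by simp [hj])] at heq2
    set P : Polynomial ℂ := aeval f (h j) with hP
    set A : Polynomial ℂ := aeval f h₁ * f 0 ^ 4 +
      ∑ k ∈ (Finset.univ.filter (fun k : Fin (n + 2) => k ≠ 0)) \ {j},
        aeval f (h k) * (f 0 + f k) ^ 4 with hA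
    have heq3 : P * (f 0 + f j) ^ 4 = -A := by
      rw [hA]; linear_combination -heq2
    have hAdeg : A.natDegree ≤ 2 := by
      rw [hA]
      apply le_trans (Polynomial.natDegree_add_le _ _)
      apply max_le
      · rw [hf0, ← Polynomial.C_pow, mul_comm]
        exact le_trans (Polynomial.natDegree_C_mul_le _ _) (hdeg _ hh₁)
      · apply le_trans (Polynomial.natDegree_sum_le _ _)
        apply Finset.sup_le
        intro k hk
        simp only [Finset.mem_sdiff, Finset.mem_filter, Finset.mem_singleton] at hk
        have hfk : f k = Polynomial.C (x k) := by simp [hfdef, hk.2]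
        simp only [Function.comp_apply]
        rw [hf0, hfk, ← Polynomial.C_add, ← Polynomial.C_pow, mul_comm]
        exact le_trans (Polynomial.natDegree_C_mul_le _ _) (hdeg _ (hh k))
    have hPzero : P = 0 := by
      by_contra hPne
      have hmonic : ((Polynomial.X + Polynomial.C (x 0)) ^ 4 : Polynomial ℂ).Monic :=
        (Polynomial.monic_X_add_C _).pow 4
      have hdegprod : (P * (f 0 + f j) ^ 4).natDegree = P.natDegree + 4 := by
        rw [hf0, hfj, add_comm (Polynomial.C (x 0)) Polynomial.X,
          Polynomial.natDegree_mul hPne hmonic.ne_zero, Polynomial.natDegree_pow,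
          Polynomial.natDegree_X_add_C]
      have : (P * (f 0 + f j) ^ 4).natDegree ≤ 2 := by
        rw [heq3, Polynomial.natDegree_neg]; exact hAdeg
      omega
    -- evaluate at x j
    have hcomp : (Polynomial.aeval (x j)).comp (MvPolynomial.aeval f) =
        (MvPolynomial.aeval x : MvPolynomial (Fin (n + 2)) ℂ →ₐ[ℂ] ℂ) := by
      apply MvPolynomial.algHom_ext
      intro k
      simp only [AlgHom.comp_apply, aeval_X, hfdef]
      split
      · next hkj => simp [hkj]
      · simp
    have := congrArg (Polynomial.aeval (x j)) hPzero
    rw [hP, map_zero, ← AlgHom.comp_apply, hcomp] at this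
    rw [show (eval x : MvPolynomial (Fin (n + 2)) ℂ →+* ℂ) (h j) = aeval x (h j) from by rw [MvPolynomial.aeval_def, Algebra.algebraMap_self]; rfl]; exact this
  refine ⟨?_, hj0⟩
  have hsum : ∑ j ∈ Finset.univ.filter (fun j : Fin (n + 2) => j ≠ 0),
      h j * (X 0 + X j) ^ 4 = 0 := by
    apply Finset.sum_eq_zero
    intro k hk
    simp only [Finset.mem_filter] at hk
    rw [hj0 k hk.2, zero_mul]
  rw [hsum, add_zero] at heq
  have hX : (X 0 : MvPolynomial (Fin (n + 2)) ℂ) ^ 4 ≠ 0 :=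
    pow_ne_zero _ (X_ne_zero 0)
  exact (mul_eq_zero.mp heq.symm).resolve_right hX
end

section
/- Suppose p ∈ ℂ[X1,...,Xn]_2 (n ≥ 3), q ∈ ℂ[X1,X2,X3]_2, λ, λ' ∈ ℂ, and ℓ, ℓ' ∈ ℂ[X1,...,Xn]_1 satisfy λq + ℓ·(X1 - Xn) = p = λ'q + ℓ'·(X1 - X_{n-1}) with n ≥ 6. Then ℓ involves only the variables X1 and X_{n-1}, and consequently p is a polynomial in the variables X1, X2, X3, X_{n-1}, Xn only. -/
open MvPolynomial

lemma aux_deg1 {σ : Type*} [DecidableEq σ] {d : σ →₀ ℕ} {j : σ}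
    (h : d.degree = 1) (hj : d j ≠ 0) : d = Finsupp.single j 1 := by
  have hjmem : j ∈ d.support := Finsupp.mem_support_iff.2 hj
  have hsum : d j + ∑ i ∈ d.support.erase j, d i = 1 := by
    rw [Finset.add_sum_erase _ _ hjmem]; exact h
  have hdj : d j = 1 := by omega
  have hz : ∑ i ∈ d.support.erase j, d i = 0 := by omega
  ext k
  rcases eq_or_ne k j with rfl | hk
  · simp [hdj]
  · rw [Finsupp.single_apply, if_neg (Ne.symm hk)]
    by_contra hkne
    exact hkne (Finset.sum_eq_zero_iff.1 hz k
      (Finset.mem_erase.2 ⟨hk, Finsupp.mem_support_iff.2 hkne⟩))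


/-- In `n + 6 ≥ 6` variables (paper's `X₁` is `X 0`, `X_{n-1}` is `X ⟨n+4,_⟩`,
`X_n` is `X ⟨n+5,_⟩`): if `q` depends only on `X₁, X₂, X₃`, `ℓ, ℓ'` are linear
forms, and `λq + ℓ·(X₁ - X_n) = p = λ'q + ℓ'·(X₁ - X_{n-1})`, then `ℓ` involves
only `X₁` and `X_{n-1}`, and `p` is a polynomial in `X₁, X₂, X₃, X_{n-1}, X_n`
only. -/
theorem stmt_13 (n : ℕ) (p q ℓ ℓ' : MvPolynomial (Fin (n + 6)) ℂ) (lam lam' : ℂ)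
    (hq : q ∈ MvPolynomial.supported ℂ ({0, 1, 2} : Set (Fin (n + 6))))
    (hℓ : ℓ.IsHomogeneous 1) (hℓ' : ℓ'.IsHomogeneous 1)
    (h1 : C lam * q + ℓ * (X 0 - X ⟨n + 5, by omega⟩) = p)
    (h2 : p = C lam' * q + ℓ' * (X 0 - X ⟨n + 4, by omega⟩)) :
    ℓ ∈ MvPolynomial.supported ℂ ({0, ⟨n + 4, by omega⟩} : Set (Fin (n + 6))) ∧
    p ∈ MvPolynomial.supported ℂ
      ({0, 1, 2, ⟨n + 4, by omega⟩, ⟨n + 5, by omega⟩} : Set (Fin (n + 6))) := by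
  set a : Fin (n+6) := ⟨n+4, by omega⟩ with ha
  set b : Fin (n+6) := ⟨n+5, by omega⟩ with hb
  have hval1 : ((1 : Fin (n+6)) : ℕ) = 1 := rfl
  have hval2 : ((2 : Fin (n+6)) : ℕ) = 2 := rfl
  have ha0 : a ≠ 0 := by simp [ha, Fin.ext_iff]
  have hb0 : b ≠ 0 := by simp [hb, Fin.ext_iff]
  have hba : b ≠ a := by simp [ha, hb, Fin.ext_iff]
  have heq : C lam * q + ℓ * (X 0 - X b) = C lam' * q + ℓ' * (X 0 - X a) := h1.trans h2
  have key : ∀ j : Fin (n+6), j ≠ 0 → j ≠ a → coeff (Finsupp.single j 1) ℓ = 0 := by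
    intro j hj0 hja
    set m : Fin (n+6) →₀ ℕ := Finsupp.single j 1 + Finsupp.single b 1 with hm
    have hm0 : (0 : Fin (n+6)) ∉ m.support := by
      simp [hm, Finsupp.single_apply, hj0, hb0, Ne.symm]
    have hma : a ∉ m.support := by
      simp [hm, Finsupp.single_apply, hja, hba, Ne.symm]
    have hmb : b ∈ m.support := by
      simp [hm, Finsupp.single_apply]
    have hsub : m - Finsupp.single b 1 = Finsupp.single j 1 := add_tsub_cancel_right _ _
    have hmq : coeff m q = 0 := by
      by_contra hne
      have hbv : b ∈ q.vars := (mem_vars b).2 ⟨m, mem_support_iff.2 hne, hmb⟩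
      have := (mem_supported.1 hq) (Finset.mem_coe.2 hbv)
      simp only [Set.mem_insert_iff, Set.mem_singleton_iff, Fin.ext_iff, Fin.val_zero,
        hval1, hval2, hb] at this
      omega
    have hc := congrArg (coeff m) heq
    simp only [mul_sub, coeff_add, coeff_sub, coeff_C_mul, coeff_mul_X', if_neg hm0,
      if_neg hma, if_pos hmb, hsub, hmq, mul_zero] at hc
    simp only [zero_add, zero_sub, sub_zero, neg_eq_zero] at hc
    exact hc
  have hℓmem : ℓ ∈ supported ℂ ({0, a} : Set (Fin (n+6))) := by
    rw [mem_supported]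
    intro j hj
    obtain ⟨d, hd, hjd⟩ := (mem_vars j).1 (Finset.mem_coe.1 hj)
    have hdeg : d.degree = 1 := by
      rw [Finsupp.degree_eq_weight_one]; exact hℓ (mem_support_iff.1 hd)
    have hds := aux_deg1 (j := j) hdeg (Finsupp.mem_support_iff.1 hjd)
    by_contra hjm
    simp only [Set.mem_insert_iff, Set.mem_singleton_iff, not_or] at hjm
    exact (mem_support_iff.1 hd) (hds ▸ key j hjm.1 hjm.2)
  refine ⟨hℓmem, ?_⟩
  rw [← h1]
  have hS : ({0, 1, 2} : Set (Fin (n+6))) ⊆ {0, 1, 2, a, b} := by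
    intro x hx; simp only [Set.mem_insert_iff, Set.mem_singleton_iff] at hx ⊢; tauto
  refine Subalgebra.add_mem _ (Subalgebra.mul_mem _ ?_ (supported_mono hS hq))
    (Subalgebra.mul_mem _ ?_ (Subalgebra.sub_mem _ ?_ ?_))
  · exact Subalgebra.algebraMap_mem _ lam
  · refine supported_mono ?_ hℓmem
    intro x hx; simp only [Set.mem_insert_iff, Set.mem_singleton_iff] at hx ⊢; tauto
  · exact X_mem_supported.2 (by simp)
  · exact X_mem_supported.2 (by simp)
end
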